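/- For fixed z, y, Δ, l, the condition 'for all ỹ ∈ Bias_{l,Δ}(y), |z·ỹ − z·y| ≤ ε' holds if and only if ε ≥ max(S⁺, S⁻), where S⁺ is the sum of the l largest ρ_i^+ = max_{d∈δ_i} z_i d and S⁻ is the sum of the l largest ρ_i^- = max_{d∈δ_i} (−z_i d). -/

import Mathlib

open Matrix Set Finset

/-- The bias set: label vectors differing from `y` in at most `l` coordinates,
with per-coordinate difference in `[δl i, δu i]`. -/
def Bias {n : ℕ} (y δl δu : Fin n → ℝ) (l : ℕ) : Set (Fin n → ℝ) :=
  {y' | (∀ i, y' i - y i ∈ Set.Icc (δl i) (δu i)) ∧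
        (Finset.univ.filter (fun i => y' i ≠ y i)).card ≤ l}

/-- Dot product of two vectors in `ℝ^n`. -/
def dotR {n : ℕ} (z v : Fin n → ℝ) : ℝ := ∑ i, z i * v i

/-- Sum of the `l` largest entries of `ρ`. -/
noncomputable def topSum {n : ℕ} (ρ : Fin n → ℝ) (l : ℕ) : ℝ :=
  (((List.ofFn ρ).mergeSort (· ≥ ·)).take l).sum

lemma sortedTop {n : ℕ} (ρ : Fin n → ℝ) :
    ((List.ofFn ρ).mergeSort (· ≥ ·)).Pairwise (· ≥ ·) := by
  have := List.pairwise_mergeSort (le := fun a b : ℝ => a ≥ b)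
    (fun a b c h₁ h₂ => by simp at *; linarith)
    (fun a b => by simpa using le_total b a) (List.ofFn ρ)
  simpa using this

lemma take_sum_le_of_sublist {m L : List ℝ} (h : m.Sublist L) (hs : L.Pairwise (· ≥ ·)) :
    m.sum ≤ (L.take m.length).sum := by
  induction h with
  | slnil => simp
  | @cons m' L' a h ih =>
    have hs' : L'.Pairwise (· ≥ ·) := hs.of_cons
    refine (ih hs').trans ?_
    rcases Nat.eq_zero_or_pos m'.length with hk | hk
    · simp [hk]
    · obtain ⟨k', hk'⟩ : ∃ k', m'.length = k' + 1 := ⟨m'.length - 1, by omega⟩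
      rw [hk']
      have hlen : k' < L'.length := by
        have := h.length_le; omega
      rw [List.sum_take_succ _ _ hlen]
      have h1 : L'[k'] ≤ a := List.rel_of_pairwise_cons hs (List.getElem_mem hlen)
      have : (a :: L').take (k' + 1) = a :: L'.take k' := rfl
      rw [this, List.sum_cons]
      linarith
  | @cons_cons m' L' a h ih =>
    have hs' : L'.Pairwise (· ≥ ·) := hs.of_cons
    have : (a :: L').take (a :: m').length = a :: L'.take m'.length := rfl
    rw [this, List.sum_cons, List.sum_cons]
    linarith [ih hs']

lemma take_sum_mono {L : List ℝ} (hL : ∀ x ∈ L, 0 ≤ x) {k l : ℕ} (h : k ≤ l) :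
    (L.take k).sum ≤ (L.take l).sum := by
  have hh : l = k + (l - k) := by omega
  rw [hh, List.take_add, List.sum_append]
  have : 0 ≤ (List.take (l - k) (L.drop k)).sum := by
    refine List.sum_nonneg fun x hx => hL x ?_
    exact ((List.take_sublist _ _).trans (List.drop_sublist _ _)).subset hx
  linarith

lemma mem_of_mem_top {n : ℕ} (ρ : Fin n → ℝ) {x : ℝ}
    (hx : x ∈ (List.ofFn ρ).mergeSort (· ≥ ·)) : ∃ i, ρ i = x := by
  have := (List.mergeSort_perm (List.ofFn ρ) _).mem_iff.mp hx
  simpa [List.mem_ofFn, Eq.comm] using this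

lemma topSum_ge {n : ℕ} (ρ : Fin n → ℝ) (hρ : ∀ i, 0 ≤ ρ i) {l : ℕ}
    (s : Finset (Fin n)) (hs : s.card ≤ l) : ∑ i ∈ s, ρ i ≤ topSum ρ l := by
  set L := (List.ofFn ρ).mergeSort (· ≥ ·) with hLdef
  have h1 : (s.toList.map ρ).Subperm (List.ofFn ρ) := by
    rw [← Multiset.coe_le]
    have e1 : (↑(s.toList.map ρ) : Multiset ℝ) = s.val.map ρ := by
      simp [← Multiset.map_coe, Finset.coe_toList]
    have e2 : (↑(List.ofFn ρ) : Multiset ℝ) = (Finset.univ : Finset (Fin n)).val.map ρ := by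
      simp [List.ofFn_eq_map, Fin.univ_def, ← Multiset.map_coe]
    rw [e1, e2]
    exact Multiset.map_le_map (Finset.val_le_iff.mpr (Finset.subset_univ s))
  have h2 : (s.toList.map ρ).Subperm L :=
    h1.trans (List.mergeSort_perm (List.ofFn ρ) _).symm.subperm
  obtain ⟨t, ht, hsub⟩ := h2
  have hlen : t.length ≤ l := by
    rw [ht.length_eq, List.length_map, Finset.length_toList]; exact hs
  calc ∑ i ∈ s, ρ i = (s.toList.map ρ).sum := (Finset.sum_map_toList s ρ).symm
    _ = t.sum := ht.sum_eq.symm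
    _ ≤ (L.take t.length).sum := take_sum_le_of_sublist hsub (sortedTop ρ)
    _ ≤ (L.take l).sum := by
        refine take_sum_mono (fun x hx => ?_) hlen
        obtain ⟨i, rfl⟩ := mem_of_mem_top ρ hx
        exact hρ i

lemma topSum_exists {n : ℕ} (ρ : Fin n → ℝ) {l : ℕ} (hln : l ≤ n) :
    ∃ s : Finset (Fin n), s.card ≤ l ∧ ∑ i ∈ s, ρ i = topSum ρ l := by
  set L := (List.ofFn ρ).mergeSort (· ≥ ·) with hLdef
  have h1 : (L.take l).Subperm (List.ofFn ρ) :=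
    (List.take_sublist l L).subperm.trans (List.mergeSort_perm (List.ofFn ρ) _).subperm
  obtain ⟨t, ht, hsub⟩ := h1
  rw [List.ofFn_eq_map] at hsub
  obtain ⟨u, hu, rfl⟩ := List.sublist_map_iff.mp hsub
  have hnd : u.Nodup := (List.nodup_finRange n).sublist hu
  refine ⟨u.toFinset, ?_, ?_⟩
  · rw [List.toFinset_card_of_nodup hnd]
    have : (u.map ρ).length = (L.take l).length := ht.length_eq
    simp at this
    omega
  · rw [List.sum_toFinset ρ hnd, ht.sum_eq]
    rfl


/-- Characterization of the minimal certifiable robustness radius: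
`|z·ỹ - z·y| ≤ ε` for all `ỹ` in the bias set iff
`ε ≥ max S⁺ S⁻`, where `S⁺` (resp. `S⁻`) is the sum of the `l` largest
positive (resp. negative) potential impacts. -/
theorem stmt18 {n : ℕ} (z y δl δu : Fin n → ℝ)
    (hl : ∀ i, δl i ≤ 0) (hu : ∀ i, 0 ≤ δu i) (l : ℕ) (hln : l ≤ n)
    (ε : ℝ) (hε : 0 ≤ ε) :
    (∀ y' ∈ Bias y δl δu l, |dotR z y' - dotR z y| ≤ ε) ↔
      max (topSum (fun i => max (z i * δl i) (z i * δu i)) l)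
          (topSum (fun i => max (-(z i) * δl i) (-(z i) * δu i)) l) ≤ ε := by
  have key_pt : ∀ (w : Fin n → ℝ) (i : Fin n) (d : ℝ), d ∈ Set.Icc (δl i) (δu i) →
      w i * d ≤ max (w i * δl i) (w i * δu i) := by
    intro w i d hd
    rcases le_or_gt 0 (w i) with h | h
    · exact le_max_of_le_right (mul_le_mul_of_nonneg_left hd.2 h)
    · exact le_max_of_le_left (mul_le_mul_of_nonpos_left hd.1 h.le)
  have ρ_nonneg : ∀ (w : Fin n → ℝ) (i : Fin n), 0 ≤ max (w i * δl i) (w i * δu i) := by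
    intro w i
    simpa using key_pt w i 0 ⟨hl i, hu i⟩
  have hdot : ∀ y' : Fin n → ℝ, dotR z y' - dotR z y = ∑ i, z i * (y' i - y i) := by
    intro y'
    simp [dotR, ← Finset.sum_sub_distrib, mul_sub]
  have upper : ∀ (w : Fin n → ℝ) (y' : Fin n → ℝ), y' ∈ Bias y δl δu l →
      ∑ i, w i * (y' i - y i) ≤ topSum (fun i => max (w i * δl i) (w i * δu i)) l := by
    rintro w y' ⟨h1, h2⟩
    set s := Finset.univ.filter fun i => y' i ≠ y i with hsdef
    have he : ∑ i, w i * (y' i - y i) = ∑ i ∈ s, w i * (y' i - y i) := by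
      rw [hsdef]
      refine (Finset.sum_filter_of_ne ?_).symm
      intro i _ hne
      intro hc
      simp [hc] at hne
    rw [he]
    calc ∑ i ∈ s, w i * (y' i - y i)
        ≤ ∑ i ∈ s, max (w i * δl i) (w i * δu i) :=
          Finset.sum_le_sum fun i _ => key_pt w i _ (h1 i)
      _ ≤ topSum (fun i => max (w i * δl i) (w i * δu i)) l :=
          topSum_ge _ (ρ_nonneg w) s h2
  have attain : ∀ w : Fin n → ℝ, (∀ y' ∈ Bias y δl δu l, |∑ i, w i * (y' i - y i)| ≤ ε) →
      topSum (fun i => max (w i * δl i) (w i * δu i)) l ≤ ε := by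
    intro w hw
    obtain ⟨s, hs, hsum⟩ := topSum_exists (fun i => max (w i * δl i) (w i * δu i)) hln
    set d : Fin n → ℝ := fun i => if w i * δl i ≤ w i * δu i then δu i else δl i with hddef
    have hd : ∀ i, w i * d i = max (w i * δl i) (w i * δu i) := by
      intro i
      rw [hddef]
      dsimp only
      split
      · rw [max_eq_right ‹_›]
      · rw [max_eq_left (le_of_not_ge ‹_›)]
    have hdIcc : ∀ i, d i ∈ Set.Icc (δl i) (δu i) := by
      intro i
      rw [hddef]
      dsimp only
      split
      · exact ⟨(hl i).trans (hu i), le_refl _⟩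
      · exact ⟨le_refl _, (hl i).trans (hu i)⟩
    set y' : Fin n → ℝ := fun i => if i ∈ s then y i + d i else y i with hy'def
    have hmem : y' ∈ Bias y δl δu l := by
      constructor
      · intro i
        rw [hy'def]
        dsimp only
        split
        · simpa using hdIcc i
        · simpa using ⟨hl i, hu i⟩
      · refine le_trans (Finset.card_le_card ?_) hs
        intro i hi
        simp only [Finset.mem_filter, Finset.mem_univ, true_and] at hi
        by_contra hns
        apply hi
        rw [hy'def]
        simp [hns]
    have habs := hw y' hmem
    have hval : ∑ i, w i * (y' i - y i) = topSum (fun i => max (w i * δl i) (w i * δu i)) l := by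
      rw [← hsum]
      rw [← Finset.sum_subset (Finset.subset_univ s)
        (fun i _ hi => by rw [hy'def]; simp [hi])]
      refine Finset.sum_congr rfl fun i hi => ?_
      rw [hy'def]
      simp only [hi, if_pos]
      rw [add_sub_cancel_left, hd i]
    rw [hval] at habs
    exact (le_abs_self _).trans habs
  constructor
  · intro H
    rw [max_le_iff]
    constructor
    · refine attain z fun y' hy' => ?_
      rw [← hdot]
      exact H y' hy'
    · refine attain (fun i => -z i) fun y' hy' => ?_
      have : ∑ i, (fun i => -z i) i * (y' i - y i) = -(dotR z y' - dotR z y) := by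
        rw [hdot]
        simp [Finset.sum_neg_distrib, neg_mul]
      rw [this, abs_neg]
      exact H y' hy'
  · intro H y' hy'
    rw [max_le_iff] at H
    rw [abs_le]
    constructor
    · have := (upper (fun i => -z i) y' hy').trans H.2
      rw [hdot]
      have he : ∑ i, (fun i => -z i) i * (y' i - y i) = -∑ i, z i * (y' i - y i) := by
        simp [neg_mul]
      rw [he] at this
      linarith
    · rw [hdot]
      exact (upper z y' hy').trans H.1
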